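/- If a multicast session at rate M is feasible on the information flow graph G(k, n-k, r, d), then there exists a (k, n-k) code with locality r and minimum distance at least d. -/

import Mathlib

namespace Stmt12Aux
open Finset MvPolynomial

variable {n r : ℕ} (grp : Fin n → Fin (n / (r + 1)))

/-- the group of blocks with group index `j` -/
def Gj (j : Fin (n / (r + 1))) : Finset (Fin n) := Finset.univ.filter fun i => grp i = j

variable (hgrp : ∀ j, (Gj grp j).card = r + 1)

/-- the `p`-th element of group `j` -/
def idx (j : Fin (n / (r + 1))) (p : Fin (r + 1)) : Fin n :=
  ((Gj grp j).orderIsoOfFin (hgrp j) p : Fin n)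

lemma idx_mem (j p) : idx grp hgrp j p ∈ Gj grp j :=
  (((Gj grp j).orderIsoOfFin (hgrp j)) p).2

lemma grp_idx (j p) : grp (idx grp hgrp j p) = j := by
  have := idx_mem grp hgrp j p
  simpa [Gj] using this

lemma idx_inj (j) : Function.Injective (idx grp hgrp j) := by
  intro p q h
  exact ((Gj grp j).orderIsoOfFin (hgrp j)).injective (Subtype.ext h)

lemma self_mem_Gj (i : Fin n) : i ∈ Gj grp (grp i) := by simp [Gj]

/-- position of a block inside its group -/
def pos (i : Fin n) : Fin (r + 1) :=
  ((Gj grp (grp i)).orderIsoOfFin (hgrp (grp i))).symm ⟨i, self_mem_Gj grp i⟩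

lemma idx_pos (i : Fin n) : idx grp hgrp (grp i) (pos grp hgrp i) = i := by
  simp [idx, pos]

lemma pos_idx (j p) : pos grp hgrp (idx grp hgrp j p) = p := by
  apply idx_inj grp hgrp j
  have h1 := idx_pos grp hgrp (idx grp hgrp j p)
  rwa [grp_idx grp hgrp] at h1

lemma pos_inj {i i' : Fin n} (hg : grp i = grp i') (hp : pos grp hgrp i = pos grp hgrp i') :
    i = i' := by
  have h1 := idx_pos grp hgrp i
  have h2 := idx_pos grp hgrp i'
  rw [← h1, ← h2, hg, hp]

variable (k : ℕ)

/-- generic rows of the generator matrix: data rows are variables, the last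
position of each group is the sum of the data rows of its group. -/
noncomputable def row (i : Fin n) (s : Fin k) :
    MvPolynomial (Fin (n / (r + 1)) × Fin r × Fin k) ℚ :=
  if h : (pos grp hgrp i : ℕ) < r then X (grp i, ⟨pos grp hgrp i, h⟩, s)
  else ∑ t : Fin r, X (grp i, t, s)

lemma row_idx (j : Fin (n / (r + 1))) (p : Fin (r + 1)) (s : Fin k) :
    row grp hgrp k (idx grp hgrp j p) s =
      if h : (p : ℕ) < r then X (j, ⟨p, h⟩, s) else ∑ t : Fin r, X (j, t, s) := by
  rw [row, pos_idx]; simp only [grp_idx grp hgrp]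


/-- coefficients of the local parity relation -/
noncomputable def lam (i i' : Fin n) :
    MvPolynomial (Fin (n / (r + 1)) × Fin r × Fin k) ℚ :=
  if ((pos grp hgrp i' : ℕ) = r ∨ (pos grp hgrp i : ℕ) = r) then 1 else -1

lemma row_locality (i : Fin n) (s : Fin k) :
    row grp hgrp k i s =
      ∑ i' ∈ (Gj grp (grp i)).erase i, lam grp hgrp k i i' * row grp hgrp k i' s := by
  classical
  -- reindex the sum over the group via `idx (grp i)`
  have hre : ∑ i' ∈ (Gj grp (grp i)).erase i, lam grp hgrp k i i' * row grp hgrp k i' s =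
      ∑ p ∈ (Finset.univ : Finset (Fin (r+1))).erase (pos grp hgrp i),
        lam grp hgrp k i (idx grp hgrp (grp i) p) * row grp hgrp k (idx grp hgrp (grp i) p) s := by
    refine Finset.sum_nbij' (fun i' => pos grp hgrp i') (fun p => idx grp hgrp (grp i) p) ?_ ?_ ?_ ?_ ?_
    · intro a ha
      rw [Finset.mem_erase] at ha ⊢
      refine ⟨?_, Finset.mem_univ _⟩
      intro hpe
      exact ha.1 (pos_inj grp hgrp (by simpa [Gj] using ha.2) hpe)
    · intro p hp
      rw [Finset.mem_erase] at hp ⊢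
      refine ⟨?_, idx_mem grp hgrp (grp i) p⟩
      intro he
      apply hp.1
      rw [← he, pos_idx]
    · intro a ha
      rw [Finset.mem_erase] at ha
      have hga : grp a = grp i := by simpa [Gj] using ha.2
      show idx grp hgrp (grp i) (pos grp hgrp a) = a
      rw [← hga, idx_pos]
    · intro p hp
      show pos grp hgrp (idx grp hgrp (grp i) p) = p
      rw [pos_idx]
    · intro a ha
      rw [Finset.mem_erase] at ha
      have hga : grp a = grp i := by simpa [Gj] using ha.2
      have hia : idx grp hgrp (grp i) (pos grp hgrp a) = a := by rw [← hga, idx_pos]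
      show _ = lam grp hgrp k i (idx grp hgrp (grp i) (pos grp hgrp a)) *
        row grp hgrp k (idx grp hgrp (grp i) (pos grp hgrp a)) s
      rw [hia]
  rw [hre]
  set p₀ := pos grp hgrp i with hp₀
  set j := grp i with hj
  set G : Fin (r+1) → MvPolynomial (Fin (n / (r + 1)) × Fin r × Fin k) ℚ := fun p =>
    (if ((p : ℕ) = r ∨ (p₀ : ℕ) = r) then 1 else -1) *
      (if h : (p : ℕ) < r then X (j, ⟨p, h⟩, s) else ∑ t : Fin r, X (j, t, s)) with hG
  have hterm : ∀ p, lam grp hgrp k i (idx grp hgrp j p) * row grp hgrp k (idx grp hgrp j p) s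
      = G p := by
    intro p
    rw [lam, pos_idx, row_idx, hG]
  rw [Finset.sum_congr rfl fun p _ => hterm p]
  have hsum : ∑ p ∈ (Finset.univ : Finset (Fin (r+1))).erase p₀, G p = (∑ p, G p) - G p₀ :=
    eq_sub_of_add_eq (Finset.sum_erase_add Finset.univ G (Finset.mem_univ p₀))
  rw [hsum, Fin.sum_univ_castSucc (f := G)]
  have hrow0 : row grp hgrp k i s =
      if h : (p₀ : ℕ) < r then X (j, ⟨p₀, h⟩, s) else ∑ t : Fin r, X (j, t, s) := by
    rw [row]
  rw [hrow0]
  have hGlast : G (Fin.last r) = ∑ t : Fin r, X (j, t, s) := by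
    simp [hG, Fin.val_last]
  by_cases h : (p₀ : ℕ) < r
  · have hGc : ∀ t : Fin r, G t.castSucc = - X (j, t, s) := by
      intro t
      have h1 : ((t.castSucc : Fin (r+1)) : ℕ) < r := by simpa using t.isLt
      have h2 : ¬ (((t.castSucc : Fin (r+1)) : ℕ) = r ∨ (p₀ : ℕ) = r) := by
        push_neg
        exact ⟨by omega, by omega⟩
      rw [hG]
      simp only [if_neg h2, dif_pos h1]
      have : (⟨((t.castSucc : Fin (r+1)) : ℕ), h1⟩ : Fin r) = t := by
        ext; simp
      rw [this]
      ring
    have hGp₀ : G p₀ = - X (j, ⟨p₀, h⟩, s) := by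
      rw [hG]
      simp only [dif_pos h, if_neg (by omega : ¬((p₀ : ℕ) = r ∨ (p₀ : ℕ) = r))]
      ring
    rw [dif_pos h, hGp₀, hGlast, Finset.sum_congr rfl fun t _ => hGc t]
    rw [Finset.sum_neg_distrib]
    ring
  · have hpr : (p₀ : ℕ) = r := by omega
    have hGc : ∀ t : Fin r, G t.castSucc = X (j, t, s) := by
      intro t
      have h1 : ((t.castSucc : Fin (r+1)) : ℕ) < r := by simpa using t.isLt
      rw [hG]
      simp only [if_pos (Or.inr hpr), dif_pos h1]
      have : (⟨((t.castSucc : Fin (r+1)) : ℕ), h1⟩ : Fin r) = t := by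
        ext; simp
      rw [this]
      ring
    have hGp₀ : G p₀ = ∑ t : Fin r, X (j, t, s) := by
      have : p₀ = Fin.last r := by ext; simpa using hpr
      rw [this, hGlast]
    rw [dif_neg h, hGp₀, hGlast, Finset.sum_congr rfl fun t _ => hGc t]
    ring


section Decode

variable (hr : 0 < r) (S : Finset (Fin n)) (tgt : Fin n → Fin k)

/-- data slot `t` of group `j` -/
def dblk (j : Fin (n / (r + 1))) (t : Fin r) : Fin n := idx grp hgrp j t.castSucc

/-- parity block of group `j` -/
def pblk (j : Fin (n / (r + 1))) : Fin n := idx grp hgrp j (Fin.last r)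

/-- data slots of group `j` whose block is selected -/
def Sel (j : Fin (n / (r + 1))) : Finset (Fin r) :=
  Finset.univ.filter fun t => dblk grp hgrp j t ∈ S

/-- a free (unselected) data slot of group `j`, when one exists -/
def free (j : Fin (n / (r + 1))) : Fin r :=
  if h : (Finset.univ.filter fun t => dblk grp hgrp j t ∉ S).Nonempty then
    (Finset.univ.filter fun t => dblk grp hgrp j t ∉ S).min' h
  else ⟨0, hr⟩

/-- the specialization point sending the selected rows to standard basis vectors -/
def ptv : Fin (n / (r + 1)) × Fin r × Fin k → ℚ := fun v =>
  let j := v.1; let t := v.2.1; let s := v.2.2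
  if dblk grp hgrp j t ∈ S then (if tgt (dblk grp hgrp j t) = s then 1 else 0)
  else if pblk grp hgrp j ∈ S ∧ t = free grp hgrp hr S j then
    (if tgt (pblk grp hgrp j) = s then 1 else 0) -
      ∑ t' ∈ Sel grp hgrp S j, (if tgt (dblk grp hgrp j t') = s then 1 else 0)
  else 0

lemma eval_row (hS : ∀ j, ((Gj grp j) ∩ S).card ≤ r) {i : Fin n} (hi : i ∈ S) (s : Fin k) :
    MvPolynomial.eval (ptv grp hgrp k hr S tgt) (row grp hgrp k i s) =
      if tgt i = s then 1 else 0 := by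
  classical
  rw [row]
  by_cases h : (pos grp hgrp i : ℕ) < r
  · -- data block
    rw [dif_pos h, MvPolynomial.eval_X]
    have hib : dblk grp hgrp (grp i) ⟨pos grp hgrp i, h⟩ = i := by
      rw [dblk]
      have : (⟨pos grp hgrp i, h⟩ : Fin r).castSucc = pos grp hgrp i := by
        ext; simp
      rw [this, idx_pos]
    rw [ptv]
    simp only [hib, if_pos hi]
  · -- parity block
    have hpr : (pos grp hgrp i : ℕ) = r := by omega
    have hpi : pblk grp hgrp (grp i) = i := by
      rw [pblk]
      have : Fin.last r = pos grp hgrp i := by ext; simp [hpr]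
      rw [this, idx_pos]
    have hpS : pblk grp hgrp (grp i) ∈ S := by rw [hpi]; exact hi
    rw [dif_neg h, map_sum]
    have heX : ∀ t : Fin r, MvPolynomial.eval (ptv grp hgrp k hr S tgt) (X (grp i, t, s)) =
        ptv grp hgrp k hr S tgt (grp i, t, s) := fun t => MvPolynomial.eval_X _
    rw [Finset.sum_congr rfl fun t _ => heX t]
    -- the free slot exists
    have hcard : (Sel grp hgrp S (grp i)).card + 1 ≤ r := by
      have hsub : (Sel grp hgrp S (grp i)).image (dblk grp hgrp (grp i)) ∪ {i} ⊆
          Gj grp (grp i) ∩ S := by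
        intro a ha
        rw [Finset.mem_union] at ha
        rcases ha with ha | ha
        · rw [Finset.mem_image] at ha
          obtain ⟨t, ht, rfl⟩ := ha
          rw [Sel, Finset.mem_filter] at ht
          exact Finset.mem_inter.2 ⟨idx_mem grp hgrp _ _, ht.2⟩
        · rw [Finset.mem_singleton] at ha
          rw [ha]
          exact Finset.mem_inter.2 ⟨self_mem_Gj grp i, hi⟩
      have hinj : Set.InjOn (dblk grp hgrp (grp i)) (Sel grp hgrp S (grp i)) := by
        intro a _ b _ hab
        have := idx_inj grp hgrp (grp i) hab
        exact Fin.castSucc_injective r this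
      have hni : i ∉ (Sel grp hgrp S (grp i)).image (dblk grp hgrp (grp i)) := by
        rw [Finset.mem_image]
        rintro ⟨t, _, ht⟩
        have hp2 : pos grp hgrp (dblk grp hgrp (grp i) t) = t.castSucc :=
          pos_idx grp hgrp (grp i) t.castSucc
        rw [ht] at hp2
        have := congrArg Fin.val hp2
        simp at this
        omega
      calc (Sel grp hgrp S (grp i)).card + 1
          = ((Sel grp hgrp S (grp i)).image (dblk grp hgrp (grp i))).card + 1 := by
            rw [Finset.card_image_of_injOn hinj]
        _ = ((Sel grp hgrp S (grp i)).image (dblk grp hgrp (grp i)) ∪ {i}).card := by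
            rw [Finset.card_union_of_disjoint (by simpa using hni), Finset.card_singleton]
        _ ≤ (Gj grp (grp i) ∩ S).card := Finset.card_le_card hsub
        _ ≤ r := hS (grp i)
    have hne : (Finset.univ.filter fun t => dblk grp hgrp (grp i) t ∉ S).Nonempty := by
      by_contra hcon
      rw [Finset.not_nonempty_iff_eq_empty, Finset.filter_eq_empty_iff] at hcon
      push_neg at hcon
      have : Sel grp hgrp S (grp i) = Finset.univ := by
        rw [Sel, Finset.filter_eq_self]
        intro t _
        exact hcon (Finset.mem_univ t)
      rw [this, Finset.card_univ, Fintype.card_fin] at hcard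
      omega
    have hfree_mem : dblk grp hgrp (grp i) (free grp hgrp hr S (grp i)) ∉ S := by
      rw [free, dif_pos hne]
      have := Finset.min'_mem _ hne
      rw [Finset.mem_filter] at this
      exact this.2
    -- split the sum into selected and unselected slots
    rw [← Finset.sum_filter_add_sum_filter_not Finset.univ
      (fun t => dblk grp hgrp (grp i) t ∈ S)]
    have h1 : ∑ t ∈ Finset.univ.filter (fun t => dblk grp hgrp (grp i) t ∈ S),
        ptv grp hgrp k hr S tgt (grp i, t, s) =
        ∑ t ∈ Sel grp hgrp S (grp i), (if tgt (dblk grp hgrp (grp i) t) = s then 1 else 0) := by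
      refine Finset.sum_congr rfl fun t ht => ?_
      have htS : dblk grp hgrp (grp i) t ∈ S := by
        have := Finset.mem_filter.1 ht
        exact this.2
      simp only [ptv, if_pos htS]
    have h2 : ∑ t ∈ Finset.univ.filter (fun t => ¬ dblk grp hgrp (grp i) t ∈ S),
        ptv grp hgrp k hr S tgt (grp i, t, s) =
        (if tgt (pblk grp hgrp (grp i)) = s then 1 else 0) -
          ∑ t' ∈ Sel grp hgrp S (grp i),
            (if tgt (dblk grp hgrp (grp i) t') = s then 1 else 0) := by
      have hform : ∀ t ∈ Finset.univ.filter (fun t => ¬ dblk grp hgrp (grp i) t ∈ S),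
          ptv grp hgrp k hr S tgt (grp i, t, s) =
          if t = free grp hgrp hr S (grp i) then
            ((if tgt (pblk grp hgrp (grp i)) = s then 1 else 0) -
              ∑ t' ∈ Sel grp hgrp S (grp i),
                (if tgt (dblk grp hgrp (grp i) t') = s then 1 else 0)) else 0 := by
        intro t ht
        rw [Finset.mem_filter] at ht
        rw [ptv]
        simp only [if_neg ht.2]
        by_cases hf : t = free grp hgrp hr S (grp i)
        · rw [if_pos hf, if_pos ⟨hpS, hf⟩]
        · rw [if_neg hf, if_neg (by tauto)]
      rw [Finset.sum_congr rfl hform, Finset.sum_ite_eq']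
      rw [if_pos (by rw [Finset.mem_filter]; exact ⟨Finset.mem_univ _, hfree_mem⟩)]
    rw [h1, h2, hpi]
    ring
end Decode

end Stmt12Aux

open Stmt12Aux

/-- If a multicast session at rate `M` is feasible on the
information flow graph `G(k, n-k, r, d)` — i.e. for every data collector,
attached to a set `A` of `n-d+1` block nodes, every cut (a choice `B` of severed
group bottleneck edges of capacity `r·M/k` and `C` of severed block edges of
capacity `M/k` hitting every source-collector path) has capacity at least `M` —
then there exists a `(k, n-k)` code with locality `r` and minimum distance at
least `d`: an encoder into `n` blocks where each block is a function of at most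
`r` others and any `n-d+1` blocks determine the message. -/
theorem stmt_12 (n k r d : ℕ) (M : ℝ) (hM : 0 < M) (hk : 0 < k) (hr : 0 < r)
    (hd1 : 1 ≤ d) (hdn : d ≤ n) (hdvd : (r + 1) ∣ n)
    (grp : Fin n → Fin (n / (r + 1)))
    (hgrp : ∀ j, (Finset.univ.filter fun i => grp i = j).card = r + 1)
    (hfeas : ∀ A : Finset (Fin n), A.card = n - d + 1 →
      ∀ (B : Finset (Fin (n / (r + 1)))) (C : Finset (Fin n)),
        (∀ i ∈ A, grp i ∈ B ∨ i ∈ C) →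
        M ≤ (B.card : ℝ) * ((r : ℝ) * (M / k)) + (C.card : ℝ) * (M / k)) :
    ∃ (F : Type) (_ : Field F) (enc : (Fin k → F) → (Fin n → F)),
      (∀ i : Fin n, ∃ R : Finset (Fin n), i ∉ R ∧ R.card ≤ r ∧
        ∃ f : (Fin n → F) → F,
          (∀ y y' : Fin n → F, (∀ j ∈ R, y j = y' j) → f y = f y') ∧
          ∀ x, enc x i = f (enc x)) ∧
      (∀ A : Finset (Fin n), A.card = n - d + 1 →
        ∀ x y : Fin k → F, (∀ i ∈ A, enc x i = enc y i) → x = y) := by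
  classical
  have hgrp' : ∀ j, (Gj grp j).card = r + 1 := hgrp
  set Rg := MvPolynomial (Fin (n / (r + 1)) × Fin r × Fin k) ℚ with hRg
  let F := FractionRing Rg
  let aM : Rg →+* F := algebraMap Rg F
  refine ⟨F, inferInstance,
    fun x i => ∑ s, aM (row grp hgrp' k i s) * x s, ?_, ?_⟩
  · -- locality
    intro i
    refine ⟨(Gj grp (grp i)).erase i, Finset.notMem_erase _ _, ?_,
      fun y => ∑ i' ∈ (Gj grp (grp i)).erase i, aM (lam grp hgrp' k i i') * y i', ?_, ?_⟩
    · rw [Finset.card_erase_of_mem (self_mem_Gj grp i), hgrp' (grp i)]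
      omega
    · intro y y' hyy'
      exact Finset.sum_congr rfl fun i' hi' => by rw [hyy' i' hi']
    · intro x
      have hrl : ∀ s, aM (row grp hgrp' k i s) =
          ∑ i' ∈ (Gj grp (grp i)).erase i,
            aM (lam grp hgrp' k i i') * aM (row grp hgrp' k i' s) := by
        intro s
        rw [row_locality grp hgrp' k i s, map_sum]
        exact Finset.sum_congr rfl fun i' _ => map_mul _ _ _
      simp only [hrl, Finset.sum_mul, Finset.mul_sum, mul_assoc]
      rw [Finset.sum_comm]
  · -- decoding
    intro A hA x y hxy
    set B : Finset (Fin (n / (r + 1))) := Finset.univ.filter (fun j => Gj grp j ⊆ A) with hB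
    set C : Finset (Fin n) := A.filter (fun i => grp i ∉ B) with hC
    have hcover : ∀ i ∈ A, grp i ∈ B ∨ i ∈ C := by
      intro i hi
      by_cases hgi : grp i ∈ B
      · exact Or.inl hgi
      · exact Or.inr (Finset.mem_filter.2 ⟨hi, hgi⟩)
    have hfA := hfeas A hA B C hcover
    have hMk : (0:ℝ) < M / k := div_pos hM (Nat.cast_pos.2 hk)
    have hkBC : k ≤ B.card * r + C.card := by
      have h1 : (k:ℝ) * (M/k) = M := by
        field_simp
      have h2 : (B.card:ℝ) * ((r:ℝ) * (M/k)) + C.card * (M/k) =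
          ((B.card:ℝ) * r + C.card) * (M/k) := by ring
      have h3 : (k:ℝ) * (M/k) ≤ ((B.card:ℝ) * r + C.card) * (M/k) := by
        rw [h1, ← h2]; exact hfA
      have h4 : (k:ℝ) ≤ (B.card:ℝ) * r + C.card := le_of_mul_le_mul_right h3 hMk
      exact_mod_cast h4
    have hsplitA : (A.filter fun i => grp i ∈ B).card + C.card = A.card := by
      rw [hC]
      exact Finset.card_filter_add_card_filter_not (p := fun i => grp i ∈ B)
    have hfull : (r+1) * B.card ≤ (A.filter fun i => grp i ∈ B).card := by
      have hsub : B.biUnion (fun j => Gj grp j) ⊆ A.filter (fun i => grp i ∈ B) := by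
        intro a ha
        rw [Finset.mem_biUnion] at ha
        obtain ⟨j, hj, haj⟩ := ha
        have hga : grp a = j := by simpa [Gj] using haj
        have hjA : Gj grp j ⊆ A := by
          rw [hB] at hj; exact (Finset.mem_filter.1 hj).2
        exact Finset.mem_filter.2 ⟨hjA haj, by rw [hga]; exact hj⟩
      have hcardb : (B.biUnion (fun j => Gj grp j)).card = (r+1) * B.card := by
        rw [Finset.card_biUnion]
        · rw [Finset.sum_congr rfl fun j _ => hgrp' j]
          rw [Finset.sum_const, smul_eq_mul, mul_comm]
        · intro j1 h1 j2 h2 h12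
          refine Finset.disjoint_left.2 fun a ha1 ha2 => h12 ?_
          have e1 : grp a = j1 := by simpa [Gj] using ha1
          have e2 : grp a = j2 := by simpa [Gj] using ha2
          rw [← e1, e2]
      rw [← hcardb]
      exact Finset.card_le_card hsub
    have hlin : (r+1) * B.card = B.card * r + B.card := by ring
    set A' : Finset (Fin n) := A \ B.image (fun j => pblk grp hgrp' j) with hA'
    have hA'A : A' ⊆ A := Finset.sdiff_subset
    have hA'card : k ≤ A'.card := by
      have h5 : A.card ≤ A'.card + (B.image (fun j => pblk grp hgrp' j)).card :=
        Finset.card_le_card_sdiff_add_card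
      have h6 : (B.image (fun j => pblk grp hgrp' j)).card ≤ B.card :=
        Finset.card_image_le
      omega
    have hA'bound : ∀ j, (Gj grp j ∩ A').card ≤ r := by
      intro j
      have hmain : ∀ w ∈ Gj grp j, w ∉ A' → (Gj grp j ∩ A').card ≤ r := by
        intro w hw hwA'
        have hsub : Gj grp j ∩ A' ⊆ (Gj grp j).erase w := by
          intro a ha
          rw [Finset.mem_inter] at ha
          refine Finset.mem_erase.2 ⟨fun he => hwA' (he ▸ ha.2), ha.1⟩
        calc (Gj grp j ∩ A').card ≤ ((Gj grp j).erase w).card := Finset.card_le_card hsub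
          _ = r := by rw [Finset.card_erase_of_mem hw, hgrp' j]; omega
      by_cases hj : j ∈ B
      · refine hmain (pblk grp hgrp' j) (idx_mem grp hgrp' j _) ?_
        rw [hA']
        intro hmem
        exact (Finset.mem_sdiff.1 hmem).2 (Finset.mem_image_of_mem _ hj)
      · have : ¬ Gj grp j ⊆ A := by
          rw [hB] at hj; simpa using hj
        obtain ⟨w, hw, hwA⟩ := Finset.not_subset.1 this
        exact hmain w hw fun hmem => hwA (hA'A hmem)
    obtain ⟨S, hSA', hScard⟩ := Finset.exists_subset_card_eq hA'card
    have hSbound : ∀ j, (Gj grp j ∩ S).card ≤ r := fun j =>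
      le_trans (Finset.card_le_card (Finset.inter_subset_inter le_rfl hSA')) (hA'bound j)
    set σ := S.orderIsoOfFin hScard with hσ
    set tgt : Fin n → Fin k := fun i => if h : i ∈ S then σ.symm ⟨i, h⟩ else ⟨0, hk⟩ with htgt
    set pt := ptv grp hgrp' k hr S tgt with hpt
    set Mk : Matrix (Fin k) (Fin k) Rg :=
      Matrix.of (fun s t => row grp hgrp' k (σ s : Fin n) t) with hMkdef
    have hMkEval : ∀ s t, MvPolynomial.eval pt (Mk s t) = if s = t then 1 else 0 := by
      intro s t
      have hmem : (σ s : Fin n) ∈ S := (σ s).2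
      have := eval_row grp hgrp' k hr S tgt hSbound hmem t
      rw [hMkdef, hpt]
      rw [Matrix.of_apply, this]
      have htv : tgt (σ s : Fin n) = s := by
        rw [htgt]
        simp only [dif_pos hmem]
        have : (⟨(σ s : Fin n), hmem⟩ : {x // x ∈ S}) = σ s := Subtype.ext rfl
        rw [this, OrderIso.symm_apply_apply]
      rw [htv]
    have hdet : Mk.det ≠ 0 := by
      intro h0
      have hmap := RingHom.map_det (MvPolynomial.eval pt) Mk
      rw [h0, map_zero] at hmap
      have hone : (MvPolynomial.eval pt).mapMatrix Mk = 1 := by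
        ext s t
        rw [RingHom.mapMatrix_apply, Matrix.map_apply, hMkEval s t, Matrix.one_apply]
      rw [hone, Matrix.det_one] at hmap
      norm_num at hmap
    have hdetF : (Mk.map (aM : Rg → F)).det ≠ 0 := by
      have hmap := RingHom.map_det aM Mk
      rw [RingHom.mapMatrix_apply] at hmap
      rw [← hmap]
      intro h0
      exact hdet (IsFractionRing.injective Rg F (by rw [h0, map_zero]))
    have hinj : Function.Injective (Mk.map (aM : Rg → F)).mulVec := by
      have hu := Matrix.nonsing_inv_mul (Mk.map (aM : Rg → F)) (isUnit_iff_ne_zero.mpr hdetF)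
      intro a b hab
      have hx : (Mk.map (aM : Rg → F))⁻¹.mulVec ((Mk.map (aM : Rg → F)).mulVec a) =
          (Mk.map (aM : Rg → F))⁻¹.mulVec ((Mk.map (aM : Rg → F)).mulVec b) := by rw [hab]
      rw [Matrix.mulVec_mulVec, Matrix.mulVec_mulVec, hu, Matrix.one_mulVec, Matrix.one_mulVec] at hx
      exact hx
    apply hinj
    funext s
    have hmemA : (σ s : Fin n) ∈ A := hA'A (hSA' (σ s).2)
    have := hxy (σ s : Fin n) hmemA
    simpa [Matrix.mulVec, dotProduct, hMkdef] using this
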